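/- For the N-particle piecewise linear cumulative distribution F̂ (interpolating linearly between the points (x_i, iℓ)) and the piecewise constant cumulative distribution F̃ (jumping by ℓ at each x_i), one has ‖F̂ − F̃‖_{L¹(ℝ)} ≤ (ℓ/2)(x_N − x_0). Equivalently, the scaled 1-Wasserstein distance between the piecewise constant density ρ̂ = Σ y_i 𝟙_{[x_i, x_{i+1})} (with y_i = ℓ/(x_{i+1} − x_i)) and the empirical measure ρ̃ = ℓ Σ δ_{x_i} is at most (ℓ/2)(x_N − x_0). -/

import Mathlib

open MeasureTheory

/-- The `L¹` distance between the piecewise linear and the piecewise constant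
cumulative distributions of the particle system (i.e. the scaled 1-Wasserstein
distance between `ρ̂` and `ρ̃`) is at most `(ℓ/2)(x_N - x_0)`. -/
theorem wasserstein_distance_hat_tilde
    (N : ℕ) (hN : 1 ≤ N) (ℓ : ℝ) (hℓ : 0 < ℓ)
    (x : ℕ → ℝ)
    (hOrder : ∀ i < N, x i < x (i + 1))
    (Fhat Ftilde : ℝ → ℝ)
    (hFhat : ∀ s, Fhat s =
      (∑ i ∈ Finset.range N,
        Set.indicator (Set.Ico (x i) (x (i + 1)))
          (fun s => (i : ℝ) * ℓ + ℓ / (x (i + 1) - x i) * (s - x i)) s)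
      + Set.indicator (Set.Ici (x N)) (fun _ => (N : ℝ) * ℓ) s)
    (hFtilde : ∀ s, Ftilde s =
      (∑ i ∈ Finset.range (N - 1),
        Set.indicator (Set.Ico (x i) (x (i + 1)))
          (fun _ => ((i : ℝ) + 1) * ℓ) s)
      + Set.indicator (Set.Ici (x (N - 1))) (fun _ => (N : ℝ) * ℓ) s) :
    ∫ s : ℝ, |Fhat s - Ftilde s| ≤ ℓ / 2 * (x N - x 0) := by
  -- monotonicity
  have hle : ∀ i j, i ≤ j → j ≤ N → x i ≤ x j := by
    intro i j hij hjN
    induction j with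
    | zero =>
      have : i = 0 := Nat.le_zero.mp hij
      simp [this]
    | succ n ih =>
      rcases eq_or_lt_of_le hij with h | h
      · rw [h]
      · exact (ih (Nat.lt_succ_iff.mp h) (Nat.le_of_succ_le hjN)).trans
          (hOrder n (Nat.lt_of_succ_le hjN)).le
  set G : ℝ → ℝ := fun s => ∑ i ∈ Finset.range N,
    Set.indicator (Set.Ico (x i) (x (i + 1)))
      (fun t => ℓ * (1 - (t - x i) / (x (i + 1) - x i))) s with hG
  have key : ∀ s, |Fhat s - Ftilde s| = G s := by
    intro s
    rcases lt_or_ge s (x 0) with h0 | h0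
    · -- s < x 0
      have hz : ∀ i, i < N → s ∉ Set.Ico (x i) (x (i + 1)) := by
        intro i hi hs
        exact absurd ((hle 0 i (Nat.zero_le _) hi.le).trans hs.1) (not_le.mpr h0)
      have hN1 : s ∉ Set.Ici (x N) := by
        intro hs
        exact absurd ((hle 0 N (Nat.zero_le _) le_rfl).trans hs) (not_le.mpr h0)
      have hN2 : s ∉ Set.Ici (x (N - 1)) := by
        intro hs
        exact absurd ((hle 0 (N - 1) (Nat.zero_le _) (Nat.sub_le _ _)).trans hs)
          (not_le.mpr h0)
      have e1 : Fhat s = 0 := by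
        rw [hFhat]
        rw [Finset.sum_eq_zero (fun i hi =>
          Set.indicator_of_notMem (hz i (Finset.mem_range.mp hi)) _),
          Set.indicator_of_notMem hN1]
        ring
      have e2 : Ftilde s = 0 := by
        rw [hFtilde]
        rw [Finset.sum_eq_zero (fun i hi =>
          Set.indicator_of_notMem (hz i ((Finset.mem_range.mp hi).trans_le (Nat.sub_le _ _))) _),
          Set.indicator_of_notMem hN2]
        ring
      have e3 : G s = 0 := by
        rw [hG]
        exact Finset.sum_eq_zero (fun i hi =>
          Set.indicator_of_notMem (hz i (Finset.mem_range.mp hi)) _)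
      rw [e1, e2, e3]; simp
    rcases le_or_gt (x N) s with hNs | hNs
    · -- s ≥ x N
      have hz : ∀ i, i < N → s ∉ Set.Ico (x i) (x (i + 1)) := by
        intro i hi hs
        exact absurd ((hle (i + 1) N hi le_rfl).trans hNs) (not_le.mpr hs.2)
      have hN1 : s ∈ Set.Ici (x N) := hNs
      have hN2 : s ∈ Set.Ici (x (N - 1)) :=
        (hle (N - 1) N (Nat.sub_le _ _) le_rfl).trans hNs
      have e1 : Fhat s = N * ℓ := by
        rw [hFhat]
        rw [Finset.sum_eq_zero (fun i hi =>
          Set.indicator_of_notMem (hz i (Finset.mem_range.mp hi)) _),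
          Set.indicator_of_mem hN1]
        ring
      have e2 : Ftilde s = N * ℓ := by
        rw [hFtilde]
        rw [Finset.sum_eq_zero (fun i hi =>
          Set.indicator_of_notMem (hz i ((Finset.mem_range.mp hi).trans_le (Nat.sub_le _ _))) _),
          Set.indicator_of_mem hN2]
        ring
      have e3 : G s = 0 := by
        rw [hG]
        exact Finset.sum_eq_zero (fun i hi =>
          Set.indicator_of_notMem (hz i (Finset.mem_range.mp hi)) _)
      rw [e1, e2, e3]; simp
    · -- x 0 ≤ s < x N : find the bracketing interval
      have hex : ∃ j, s < x j := ⟨N, hNs⟩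
      classical
      have hmN : Nat.find hex ≤ N := Nat.find_le hNs
      have hm0 : Nat.find hex ≠ 0 := by
        intro h
        have := Nat.find_spec hex
        rw [h] at this
        exact absurd h0 (not_le.mpr this)
      obtain ⟨i, hmeq⟩ : ∃ i, Nat.find hex = i + 1 :=
        ⟨Nat.find hex - 1, (Nat.succ_pred_eq_of_pos (Nat.pos_of_ne_zero hm0)).symm⟩
      have hiN : i < N := by omega
      have hsu : s < x (i + 1) := hmeq ▸ Nat.find_spec hex
      have hsl : x i ≤ s := not_lt.mp (Nat.find_min hex (by omega))
      have hmem : s ∈ Set.Ico (x i) (x (i + 1)) := ⟨hsl, hsu⟩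
      have hdisj : ∀ j, j < N → j ≠ i → s ∉ Set.Ico (x j) (x (j + 1)) := by
        intro j hj hji hs
        rcases lt_or_gt_of_ne hji with h | h
        · exact absurd ((hle (j + 1) i h (hiN.le)).trans hsl) (not_le.mpr hs.2)
        · exact absurd ((hle (i + 1) j h hj.le).trans hs.1) (not_le.mpr hsu)
      have hab := hOrder i hiN
      have hΔ : x (i + 1) - x i ≠ 0 := sub_ne_zero.mpr hab.ne'
      have e1 : Fhat s = (i : ℝ) * ℓ + ℓ / (x (i + 1) - x i) * (s - x i) := by
        rw [hFhat]
        rw [Finset.sum_eq_single_of_mem i (Finset.mem_range.mpr hiN)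
          (fun j hj hji => Set.indicator_of_notMem (hdisj j (Finset.mem_range.mp hj) hji) _),
          Set.indicator_of_mem hmem,
          Set.indicator_of_notMem (by
            intro hs
            exact absurd ((hle (i + 1) N hiN le_rfl).trans hs) (not_le.mpr hsu))]
        ring
      have e2 : Ftilde s = ((i : ℝ) + 1) * ℓ := by
        rw [hFtilde]
        rcases lt_or_ge i (N - 1) with hi1 | hi1
        · rw [Finset.sum_eq_single_of_mem i (Finset.mem_range.mpr hi1)
            (fun j hj hji => Set.indicator_of_notMem
              (hdisj j ((Finset.mem_range.mp hj).trans_le (Nat.sub_le _ _)) hji) _),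
            Set.indicator_of_mem hmem,
            Set.indicator_of_notMem (by
              intro hs
              have : x (i + 1) ≤ x (N - 1) := hle (i + 1) (N - 1) hi1 (Nat.sub_le _ _)
              exact absurd (this.trans hs) (not_le.mpr hsu))]
          ring
        · -- i = N - 1
          have hieq : i = N - 1 := le_antisymm (by omega) hi1
          have hmemI : s ∈ Set.Ici (x (N - 1)) := hieq ▸ hsl
          rw [Finset.sum_eq_zero (fun j hj =>
            Set.indicator_of_notMem
              (hdisj j ((Finset.mem_range.mp hj).trans_le (Nat.sub_le _ _))
                (by have := Finset.mem_range.mp hj; omega)) _),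
            Set.indicator_of_mem hmemI]
          have : ((i : ℝ) + 1) = (N : ℝ) := by
            have : i + 1 = N := by omega
            exact_mod_cast congrArg (Nat.cast : ℕ → ℝ) this
          rw [this]; ring
      have e3 : G s = ℓ * (1 - (s - x i) / (x (i + 1) - x i)) := by
        simp only [hG]
        rw [Finset.sum_eq_single_of_mem i (Finset.mem_range.mpr hiN)
          (fun j hj hji => Set.indicator_of_notMem (hdisj j (Finset.mem_range.mp hj) hji) _),
          Set.indicator_of_mem hmem]
      rw [e1, e2, e3]
      have hval : (i : ℝ) * ℓ + ℓ / (x (i + 1) - x i) * (s - x i) - ((i : ℝ) + 1) * ℓ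
          = -(ℓ * (1 - (s - x i) / (x (i + 1) - x i))) := by
        field_simp
        ring
      rw [hval, abs_neg, abs_of_nonneg]
      have hfrac : (s - x i) / (x (i + 1) - x i) ≤ 1 := by
        rw [div_le_one (sub_pos.mpr hab)]
        linarith
      have : 0 ≤ 1 - (s - x i) / (x (i + 1) - x i) := by linarith
      positivity
  -- integrability of each indicator piece
  have hint : ∀ i ∈ Finset.range N, Integrable (fun s : ℝ =>
      Set.indicator (Set.Ico (x i) (x (i + 1)))
        (fun t => ℓ * (1 - (t - x i) / (x (i + 1) - x i))) s) := by
    intro i hi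
    have hc : Continuous (fun t : ℝ => ℓ * (1 - (t - x i) / (x (i + 1) - x i))) :=
      continuous_const.mul (continuous_const.sub
        ((continuous_id.sub continuous_const).div_const _))
    exact ((hc.integrableOn_Icc).mono_set Set.Ico_subset_Icc_self).integrable_indicator
      measurableSet_Ico
  -- value of each piece
  have hval : ∀ i ∈ Finset.range N, (∫ s : ℝ,
      Set.indicator (Set.Ico (x i) (x (i + 1)))
        (fun t => ℓ * (1 - (t - x i) / (x (i + 1) - x i))) s)
      = ℓ / 2 * (x (i + 1) - x i) := by
    intro i hi
    have hab := hOrder i (Finset.mem_range.mp hi)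
    have hΔ : x (i + 1) - x i ≠ 0 := sub_ne_zero.mpr hab.ne'
    rw [integral_indicator measurableSet_Ico, integral_Ico_eq_integral_Ioo, ← integral_Ioc_eq_integral_Ioo,
      ← intervalIntegral.integral_of_le hab.le]
    have hrw : ∀ t : ℝ, ℓ * (1 - (t - x i) / (x (i + 1) - x i))
        = (ℓ + ℓ * x i / (x (i + 1) - x i)) + (-(ℓ / (x (i + 1) - x i))) * t := by
      intro t; field_simp; ring
    simp only [hrw]
    rw [intervalIntegral.integral_add intervalIntegrable_const
      (_root_.intervalIntegral.intervalIntegrable_id.const_mul _),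
      intervalIntegral.integral_const, intervalIntegral.integral_const_mul,
      integral_id]
    rw [smul_eq_mul]
    field_simp
    ring
  have hfun : (fun s : ℝ => |Fhat s - Ftilde s|) = G := funext key
  rw [hfun, hG]
  rw [integral_finset_sum _ hint]
  rw [Finset.sum_congr rfl hval]
  rw [← Finset.mul_sum, Finset.sum_range_sub (fun i => x i)]
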